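/- arXiv:2009.06256 — 4 statements merged into one kernel-verified Lean document; each statement's English description precedes it below -/
import Mathlib

section
/- Assume the aperiodic 0-1 matrix 𝐀 satisfies that at most one index i ∈ {1,…,N} has exactly one j with 𝐀_{ij} = 1. Then for every row-stochastic matrix P with zero pattern 𝐀 and for any two distinct admissible pairs (i,j) ≠ (k,l) with 𝐀_{ij} = 𝐀_{kl} = 1, there exists a row-stochastic matrix Q with zero pattern 𝐀 such that P_{ij}/P_{kl} ≠ Q_{ij}/Q_{kl}. -/
open scoped BigOperators
open Classical

lemma perturb_aux
    (N : ℕ) (A0 : Matrix (Fin N) (Fin N) ℝ)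
    (P : Matrix (Fin N) (Fin N) ℝ)
    (hPpos : ∀ i j, 0 < P i j ↔ A0 i j = 1)
    (hPzero : ∀ i j, A0 i j = 0 → P i j = 0)
    (hPstoch : ∀ i, ∑ j, P i j = 1)
    (r c1 c2 : Fin N) (h1 : A0 r c1 = 1) (h2 : A0 r c2 = 1) (hc : c1 ≠ c2) :
    ∃ Q : Matrix (Fin N) (Fin N) ℝ,
      (∀ a b, 0 < Q a b ↔ A0 a b = 1) ∧ (∀ a b, A0 a b = 0 → Q a b = 0) ∧
      (∀ a, ∑ b, Q a b = 1) ∧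
      Q r c1 = P r c1 + P r c2 / 2 ∧ Q r c2 = P r c2 / 2 ∧
      (∀ a b, (a, b) ≠ (r, c1) → (a, b) ≠ (r, c2) → Q a b = P a b) := by
  have hp1 : 0 < P r c1 := (hPpos r c1).2 h1
  have hp2 : 0 < P r c2 := (hPpos r c2).2 h2
  set ε : ℝ := P r c2 / 2 with hε
  have hεpos : 0 < ε := by positivity
  have hne12 : (r, c1) ≠ (r, c2) := by simp [hc]
  refine ⟨fun a b => P a b + (if (a, b) = (r, c1) then ε else 0)
      - (if (a, b) = (r, c2) then ε else 0), ?_, ?_, ?_, ?_, ?_, ?_⟩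
  · intro a b
    dsimp only
    by_cases hb1 : (a, b) = (r, c1)
    · simp only [Prod.mk.injEq] at hb1
      obtain ⟨rfl, rfl⟩ := hb1
      rw [if_pos rfl, if_neg hne12]
      constructor
      · intro _; exact h1
      · intro _; linarith
    · by_cases hb2 : (a, b) = (r, c2)
      · simp only [Prod.mk.injEq] at hb2
        obtain ⟨rfl, rfl⟩ := hb2
        rw [if_neg hb1, if_pos rfl]
        constructor
        · intro _; exact h2
        · intro _; linarith
      · rw [if_neg hb1, if_neg hb2]
        simpa using hPpos a b
  · intro a b hz
    dsimp only
    by_cases hb1 : (a, b) = (r, c1)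
    · simp only [Prod.mk.injEq] at hb1
      obtain ⟨rfl, rfl⟩ := hb1
      rw [h1] at hz; norm_num at hz
    · by_cases hb2 : (a, b) = (r, c2)
      · simp only [Prod.mk.injEq] at hb2
        obtain ⟨rfl, rfl⟩ := hb2
        rw [h2] at hz; norm_num at hz
      · rw [if_neg hb1, if_neg hb2]
        simpa using hPzero a b hz
  · intro a
    dsimp only
    rw [Finset.sum_sub_distrib, Finset.sum_add_distrib]
    by_cases ha : a = r
    · subst ha
      have e1 : ∑ b, (if (a, b) = (a, c1) then ε else 0) = ε := by
        simp [Prod.mk.injEq]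
      have e2 : ∑ b, (if (a, b) = (a, c2) then ε else 0) = ε := by
        simp [Prod.mk.injEq]
      rw [e1, e2, hPstoch]; ring
    · have e1 : ∑ b, (if (a, b) = (r, c1) then ε else 0) = 0 := by
        apply Finset.sum_eq_zero; intro x _
        rw [if_neg (by simp [Prod.mk.injEq, ha])]
      have e2 : ∑ b, (if (a, b) = (r, c2) then ε else 0) = 0 := by
        apply Finset.sum_eq_zero; intro x _
        rw [if_neg (by simp [Prod.mk.injEq, ha])]
      rw [e1, e2, hPstoch]; ring
  · dsimp only; rw [if_pos rfl, if_neg hne12]; ring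
  · dsimp only; rw [if_neg (Ne.symm hne12), if_pos rfl]; ring
  · intro a b hb1 hb2
    dsimp only; rw [if_neg hb1, if_neg hb2]; ring

/-- Assume the aperiodic 0-1 matrix `A0` has at most one row `i` containing exactly one `j`
with `A0 i j = 1`.  Then for every row-stochastic matrix `P` with zero pattern `A0` and any
two distinct admissible pairs `(i, j) ≠ (k, l)`, there is a row-stochastic matrix `Q` with
zero pattern `A0` such that `P i j / P k l ≠ Q i j / Q k l`. -/
theorem exists_stochastic_with_different_ratio
    (N : ℕ) (hN : 2 ≤ N) (A0 : Matrix (Fin N) (Fin N) ℝ)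
    (h01 : ∀ i j, A0 i j = 0 ∨ A0 i j = 1)
    (hap : ∃ k : ℕ, ∀ i j, 0 < (A0 ^ k) i j)
    (hdelta :
      (Finset.univ.filter fun i : Fin N =>
        (Finset.univ.filter fun j : Fin N => A0 i j = 1).card = 1).card ≤ 1)
    (P : Matrix (Fin N) (Fin N) ℝ)
    (hPpos : ∀ i j, 0 < P i j ↔ A0 i j = 1)
    (hPzero : ∀ i j, A0 i j = 0 → P i j = 0)
    (hPstoch : ∀ i, ∑ j, P i j = 1)
    (i j k l : Fin N) (hij : A0 i j = 1) (hkl : A0 k l = 1)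
    (hne : (i, j) ≠ (k, l)) :
    ∃ Q : Matrix (Fin N) (Fin N) ℝ,
      (∀ r c, 0 < Q r c ↔ A0 r c = 1) ∧ (∀ r c, A0 r c = 0 → Q r c = 0) ∧
      (∀ r, ∑ c, Q r c = 1) ∧ P i j / P k l ≠ Q i j / Q k l := by
  have hpij : 0 < P i j := (hPpos i j).2 hij
  have hpkl : 0 < P k l := (hPpos k l).2 hkl
  by_cases hik : i = k
  · -- same row, different columns
    subst hik
    have hjl : j ≠ l := fun h => hne (by rw [h])
    obtain ⟨Q, hQ1, hQ2, hQ3, hq1, hq2, _⟩ :=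
      perturb_aux N A0 P hPpos hPzero hPstoch i j l hij hkl hjl
    refine ⟨Q, hQ1, hQ2, hQ3, ?_⟩
    rw [hq1, hq2]
    intro h
    rw [div_eq_div_iff (by positivity) (by positivity)] at h
    nlinarith
  · by_cases hrow : ∃ j', j' ≠ j ∧ A0 i j' = 1
    · -- perturb row i
      obtain ⟨j', hj'ne, hj'⟩ := hrow
      obtain ⟨Q, hQ1, hQ2, hQ3, hq1, _, hq3⟩ :=
        perturb_aux N A0 P hPpos hPzero hPstoch i j j' hij hj' (Ne.symm hj'ne)
      refine ⟨Q, hQ1, hQ2, hQ3, ?_⟩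
      have hQkl : Q k l = P k l := by
        apply hq3 <;> simp [Prod.mk.injEq] <;> intro h <;> exact absurd h.symm hik
      rw [hq1, hQkl]
      intro h
      rw [div_eq_div_iff (by positivity) (by positivity)] at h
      have hpij' : 0 < P i j' := (hPpos i j').2 hj'
      nlinarith
    · -- row i has only entry j; then row k has another entry
      push_neg at hrow
      have hrowk : ∃ l', l' ≠ l ∧ A0 k l' = 1 := by
        by_contra hK
        push_neg at hK
        have hiS : i ∈ Finset.univ.filter fun a : Fin N =>
            (Finset.univ.filter fun b : Fin N => A0 a b = 1).card = 1 := by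
          simp only [Finset.mem_filter, Finset.mem_univ, true_and]
          have : (Finset.univ.filter fun b : Fin N => A0 i b = 1) = {j} := by
            ext b
            simp only [Finset.mem_filter, Finset.mem_univ, true_and,
              Finset.mem_singleton]
            exact ⟨fun hb => by_contra fun hbne => hrow b hbne hb, fun hb => hb ▸ hij⟩
          rw [this, Finset.card_singleton]
        have hkS : k ∈ Finset.univ.filter fun a : Fin N =>
            (Finset.univ.filter fun b : Fin N => A0 a b = 1).card = 1 := by
          simp only [Finset.mem_filter, Finset.mem_univ, true_and]
          have : (Finset.univ.filter fun b : Fin N => A0 k b = 1) = {l} := by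
            ext b
            simp only [Finset.mem_filter, Finset.mem_univ, true_and,
              Finset.mem_singleton]
            exact ⟨fun hb => by_contra fun hbne => hK b hbne hb, fun hb => hb ▸ hkl⟩
          rw [this, Finset.card_singleton]
        have hsub : ({i, k} : Finset (Fin N)) ⊆
            Finset.univ.filter fun a : Fin N =>
              (Finset.univ.filter fun b : Fin N => A0 a b = 1).card = 1 := by
          intro x hx
          rcases Finset.mem_insert.1 hx with rfl | hx
          · exact hiS
          · exact Finset.mem_singleton.1 hx ▸ hkS
        have h2 : 2 ≤ (Finset.univ.filter fun a : Fin N =>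
            (Finset.univ.filter fun b : Fin N => A0 a b = 1).card = 1).card := by
          calc 2 = ({i, k} : Finset (Fin N)).card := by
                rw [Finset.card_insert_of_notMem (by simpa using hik),
                  Finset.card_singleton]
            _ ≤ _ := Finset.card_le_card hsub
        omega
      obtain ⟨l', hl'ne, hl'⟩ := hrowk
      obtain ⟨Q, hQ1, hQ2, hQ3, hq1, _, hq3⟩ :=
        perturb_aux N A0 P hPpos hPzero hPstoch k l l' hkl hl' (Ne.symm hl'ne)
      refine ⟨Q, hQ1, hQ2, hQ3, ?_⟩
      have hQij : Q i j = P i j := by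
        apply hq3 <;> simp [Prod.mk.injEq] <;> intro h <;> exact absurd h hik
      rw [hq1, hQij]
      intro h
      have hpkl' : 0 < P k l' := (hPpos k l').2 hl'
      rw [div_eq_div_iff (by positivity) (by positivity)] at h
      nlinarith
end

section
/- The map sending a matrix A ∈ M to its Perron root λ(A) is continuous (indeed real analytic) on M. -/
open Polynomial Matrix Filter Topology

/-- Evaluating the characteristic polynomial at a scalar gives a determinant. -/
private lemma charpoly_eval_det {N : ℕ} (B : Matrix (Fin N) (Fin N) ℂ) (z : ℂ) :
    B.charpoly.eval z = (Matrix.scalar (Fin N) z - B).det := by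
  rw [Matrix.charpoly, _root_.eval_det, matPolyEquiv_charmatrix]
  simp

/-- Any complex root of the characteristic polynomial of a real matrix is bounded in
modulus by the sum of absolute values of the entries. -/
private lemma root_abs_le {N : ℕ} (hN : 1 ≤ N) (B : Matrix (Fin N) (Fin N) ℝ) (z : ℂ)
    (hz : ((B.map (Complex.ofReal)).charpoly).IsRoot z) :
    ‖z‖ ≤ ∑ i, ∑ j, |B i j| := by
  have : (0:ℕ) < N := hN
  haveI : NeZero N := ⟨by omega⟩
  set B' : Matrix (Fin N) (Fin N) ℂ := B.map (Complex.ofReal)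
  have hdet : (Matrix.scalar (Fin N) z - B').det = 0 := by
    have := hz
    rwa [Polynomial.IsRoot, charpoly_eval_det] at this
  obtain ⟨v, hv0, hvec⟩ := (Matrix.exists_mulVec_eq_zero_iff
    (A := ℂ)).mpr hdet
  -- pick the index of maximal modulus
  obtain ⟨i, -, hi⟩ := Finset.exists_max_image Finset.univ
    (fun i => ‖v i‖) ⟨0, Finset.mem_univ 0⟩
  have hvi : 0 < ‖v i‖ := by
    rcases Function.ne_iff.mp hv0 with ⟨j, hj⟩
    have := hi j (Finset.mem_univ j)
    have hj' : 0 < ‖v j‖ := by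
      simpa [norm_pos_iff] using hj
    linarith
  -- from the eigen-equation at row i
  have hrow : z * v i = ∑ j, B' i j * v j := by
    have := congrFun hvec i
    simp only [Matrix.sub_mulVec, Pi.sub_apply, Pi.zero_apply, sub_eq_zero] at this
    have hscal : (Matrix.scalar (Fin N) z *ᵥ v) i = z * v i := by
      simp [Matrix.scalar, Matrix.mulVec, dotProduct, Matrix.diagonal,
        Finset.sum_ite_eq, Finset.mem_univ]
    rw [hscal] at this
    rw [this]
    simp [Matrix.mulVec, dotProduct]
  have hbound : ‖z‖ * ‖v i‖ ≤ (∑ i', ∑ j, |B i' j|) * ‖v i‖ := by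
    calc ‖z‖ * ‖v i‖ = ‖z * v i‖ := (norm_mul _ _).symm
      _ = ‖∑ j, B' i j * v j‖ := by rw [hrow]
      _ ≤ ∑ j, ‖B' i j * v j‖ := norm_sum_le _ _
      _ ≤ ∑ j, |B i j| * ‖v i‖ := by
          apply Finset.sum_le_sum
          intro j _
          rw [norm_mul]
          have h1 : ‖B' i j‖ = |B i j| := by
            simp [B', Matrix.map_apply]
          rw [h1]
          exact mul_le_mul_of_nonneg_left (hi j (Finset.mem_univ j)) (abs_nonneg _)
      _ = (∑ j, |B i j|) * ‖v i‖ := by rw [Finset.sum_mul]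
      _ ≤ (∑ i', ∑ j, |B i' j|) * ‖v i‖ := by
          apply mul_le_mul_of_nonneg_right _ (norm_nonneg _)
          exact Finset.single_le_sum (f := fun i' => ∑ j, |B i' j|)
            (fun i' _ => Finset.sum_nonneg fun j _ => abs_nonneg _) (Finset.mem_univ i)
  exact le_of_mul_le_mul_right hbound hvi

/-- If the characteristic polynomial is small at `z`, then `z` is close to a root. -/
private lemma exists_root_near {N : ℕ} (hN : 1 ≤ N) (B : Matrix (Fin N) (Fin N) ℂ) (z : ℂ)
    {ε : ℝ} (hε : 0 < ε) (h : ‖B.charpoly.eval z‖ < ε ^ N) :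
    ∃ w : ℂ, B.charpoly.IsRoot w ∧ ‖z - w‖ < ε := by
  by_contra hcon
  push_neg at hcon
  have hmonic := B.charpoly_monic
  have hne : B.charpoly ≠ 0 := hmonic.ne_zero
  have hsplits : B.charpoly.Splits := IsAlgClosed.splits _
  have hcard : B.charpoly.roots.card = N := by
    rw [(Polynomial.splits_iff_card_roots).mp hsplits, Matrix.charpoly_natDegree_eq_dim,
      Fintype.card_fin]
  have hfact := hsplits.eq_prod_roots_of_monic hmonic
  have heval : B.charpoly.eval z = (B.charpoly.roots.map (fun w => z - w)).prod := by
    conv_lhs => rw [hfact]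
    rw [Polynomial.eval_multiset_prod, Multiset.map_map]
    congr 1
    apply Multiset.map_congr rfl
    intro w _
    simp
  -- pass to nonnegative reals
  have hnn : ‖B.charpoly.eval z‖₊ = (B.charpoly.roots.map (fun w => ‖z - w‖₊)).prod := by
    have hmp := map_multiset_prod (nnnormHom : ℂ →*₀ NNReal)
      (Multiset.map (fun w => z - w) B.charpoly.roots)
    rw [heval]
    simp only [nnnormHom_apply] at hmp
    rw [hmp, Multiset.map_map]
    rfl
  have hlow : ε.toNNReal ^ N ≤ (B.charpoly.roots.map (fun w => ‖z - w‖₊)).prod := by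
    have hcard' : (B.charpoly.roots.map (fun w => ‖z - w‖₊)).card = N := by
      rw [Multiset.card_map, hcard]
    have hple := Multiset.pow_card_le_prod
      (s := B.charpoly.roots.map (fun w => ‖z - w‖₊)) (a := ε.toNNReal) ?_
    · rwa [hcard'] at hple
    intro x hx
    obtain ⟨w, hw, rfl⟩ := Multiset.mem_map.mp hx
    have hwroot : B.charpoly.IsRoot w := (Polynomial.mem_roots hne).mp hw
    have := hcon w hwroot
    rw [← Real.toNNReal_coe (r := ‖z - w‖₊)]
    apply Real.toNNReal_le_toNNReal
    simpa using this
  have hup : ‖B.charpoly.eval z‖₊ < ε.toNNReal ^ N := by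
    have hcoe : (‖B.charpoly.eval z‖₊ : ℝ) < ((ε.toNNReal ^ N : NNReal) : ℝ) := by
      push_cast [Real.coe_toNNReal _ hε.le]
      simpa using h
    exact_mod_cast hcoe
  rw [hnn] at hup
  exact absurd hlow (not_le.mpr hup)

/-- The Perron root, as a function on the set `M` of nonnegative matrices with zero pattern
given by the aperiodic 0-1 matrix `A0`, is continuous on `M`.  Here `lam : Matrix → ℝ` is any
function which, on `M`, picks out the Perron root: the positive eigenvalue strictly dominating
in modulus every other complex eigenvalue. -/
theorem perron_root_continuousOn
    (N : ℕ) (hN : 2 ≤ N) (A0 : Matrix (Fin N) (Fin N) ℝ)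
    (h01 : ∀ i j, A0 i j = 0 ∨ A0 i j = 1)
    (hap : ∃ k : ℕ, ∀ i j, 0 < (A0 ^ k) i j)
    (M : Set (Matrix (Fin N) (Fin N) ℝ))
    (hM : M = {A | ∀ i j, (0 < A i j ↔ A0 i j = 1) ∧ (A0 i j = 0 → A i j = 0)})
    (lam : Matrix (Fin N) (Fin N) ℝ → ℝ)
    (hlam : ∀ A ∈ M, 0 < lam A ∧
      (A.map Complex.ofReal).charpoly.IsRoot ((lam A : ℝ) : ℂ) ∧
      (∀ η : ℂ, (A.map Complex.ofReal).charpoly.IsRoot η → η ≠ ((lam A : ℝ) : ℂ) →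
        ‖η‖ < lam A)) :
    ContinuousOn lam M := by
  have hN1 : 1 ≤ N := le_trans one_le_two hN
  intro A hA
  obtain ⟨hApos, hAroot, hAdom⟩ := hlam A hA
  rw [ContinuousWithinAt, Metric.tendsto_nhds]
  intro ε hε
  have hεN : 0 < ε ^ N := pow_pos hε N
  -- notation
  set S : Matrix (Fin N) (Fin N) ℝ → ℝ := fun B => ∑ i, ∑ j, |B i j| with hS
  have hScont : Continuous S := by
    apply continuous_finset_sum
    intro i _
    apply continuous_finset_sum
    intro j _
    exact (continuous_apply_apply i j).abs
  set R : ℝ := S A + 1 with hR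
  -- the determinant function
  set F : Matrix (Fin N) (Fin N) ℝ → ℂ → ℂ :=
    fun B z => (Matrix.scalar (Fin N) z - B.map Complex.ofReal).det with hF
  have hFcont : Continuous (fun p : Matrix (Fin N) (Fin N) ℝ × ℂ => F p.1 p.2) := by
    apply Continuous.matrix_det
    apply Continuous.sub
    · exact Continuous.matrix_diagonal (by continuity)
    · exact (continuous_fst.matrix_map Complex.continuous_ofReal)
  have hFeval : ∀ B z, ((B.map Complex.ofReal).charpoly).eval z = F B z := by
    intro B z
    rw [charpoly_eval_det]
  -- Event 1: S B < R
  have h1 : ∀ᶠ B in 𝓝[M] A, S B < R := by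
    apply Filter.Eventually.filter_mono nhdsWithin_le_nhds
    have : Tendsto S (𝓝 A) (𝓝 (S A)) := hScont.continuousAt
    exact this.eventually_lt_const (by rw [hR]; linarith)
  -- Event 2 (lower bound): lam A - ε < lam B
  have h2 : ∀ᶠ B in 𝓝[M] A, ∀ hB : B ∈ M, lam A - ε < lam B := by
    have hcont : Tendsto (fun B => ‖F B ((lam A : ℝ) : ℂ)‖) (𝓝 A)
        (𝓝 (‖F A ((lam A : ℝ) : ℂ)‖)) := by
      apply Continuous.tendsto
      exact continuous_norm.comp (hFcont.comp (Continuous.prodMk_left _))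
    have hzero : ‖F A ((lam A : ℝ) : ℂ)‖ = 0 := by
      rw [← hFeval]
      rw [Polynomial.IsRoot] at hAroot
      rw [hAroot]
      simp
    rw [hzero] at hcont
    have hev : ∀ᶠ B in 𝓝 A, ‖F B ((lam A : ℝ) : ℂ)‖ < ε ^ N :=
      hcont.eventually_lt_const hεN
    apply Filter.Eventually.filter_mono nhdsWithin_le_nhds
    filter_upwards [hev] with B hB hBM
    obtain ⟨hBpos, hBroot, hBdom⟩ := hlam B hBM
    obtain ⟨w, hwroot, hwnear⟩ := exists_root_near hN1 (B.map Complex.ofReal)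
      ((lam A : ℝ) : ℂ) hε (by rw [hFeval]; exact hB)
    have hwle : ‖w‖ ≤ lam B := by
      by_cases hwe : w = ((lam B : ℝ) : ℂ)
      · rw [hwe]
        simp [Complex.norm_real, Real.norm_eq_abs, abs_of_pos hBpos]
      · exact le_of_lt (hBdom w hwroot hwe)
    have : (lam A : ℝ) ≤ ‖w‖ + ‖((lam A : ℝ) : ℂ) - w‖ := by
      calc (lam A : ℝ) = ‖((lam A : ℝ) : ℂ)‖ := by
            simp [Complex.norm_real, Real.norm_eq_abs, abs_of_pos hApos]
        _ = ‖w + (((lam A : ℝ) : ℂ) - w)‖ := by ring_nf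
        _ ≤ ‖w‖ + ‖((lam A : ℝ) : ℂ) - w‖ := by
            apply norm_add_le
    linarith
  -- Event 3 (upper bound): uniform closeness of F B to F A on the closed ball of radius R
  have h3 : ∀ᶠ B in 𝓝[M] A, ∀ z ∈ Metric.closedBall (0 : ℂ) R,
      ‖F A z - F B z‖ < ε ^ N := by
    apply Filter.Eventually.filter_mono nhdsWithin_le_nhds
    apply (isCompact_closedBall (0 : ℂ) R).eventually_forall_of_forall_eventually
    intro z hz
    have hcont : Continuous (fun p : Matrix (Fin N) (Fin N) ℝ × ℂ =>
        ‖F A p.2 - F p.1 p.2‖) := by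
      apply continuous_norm.comp
      apply Continuous.sub
      · exact hFcont.comp ((Continuous.prodMk_right A).comp continuous_snd)
      · exact hFcont
    have := (hcont.tendsto (A, z)).eventually_lt_const (by simpa using hεN)
    simpa using this
  -- Combine
  have hMev : ∀ᶠ B in 𝓝[M] A, B ∈ M := eventually_mem_nhdsWithin
  filter_upwards [h1, h2, h3, hMev] with B hB1 hB2 hB3 hBM
  obtain ⟨hBpos, hBroot, hBdom⟩ := hlam B hBM
  -- lam B is bounded: lam B ≤ S B < R
  have hlamB_le : lam B ≤ S B := by
    have := root_abs_le hN1 B ((lam B : ℝ) : ℂ) hBroot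
    simpa [Complex.norm_real, Real.norm_eq_abs, abs_of_pos hBpos] using this
  have hlamB_lt_R : lam B < R := lt_of_le_of_lt hlamB_le hB1
  -- upper bound: lam B < lam A + ε
  have hupper : lam B < lam A + ε := by
    have hmem : ((lam B : ℝ) : ℂ) ∈ Metric.closedBall (0 : ℂ) R := by
      simp only [Metric.mem_closedBall, dist_zero_right]
      rw [Complex.norm_real, Real.norm_eq_abs, abs_of_pos hBpos]
      exact hlamB_lt_R.le
    have hBzero : F B ((lam B : ℝ) : ℂ) = 0 := by
      rw [← hFeval]
      exact hBroot
    have hsmall : ‖F A ((lam B : ℝ) : ℂ)‖ < ε ^ N := by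
      have := hB3 _ hmem
      rwa [hBzero, sub_zero] at this
    obtain ⟨w, hwroot, hwnear⟩ := exists_root_near hN1 (A.map Complex.ofReal)
      ((lam B : ℝ) : ℂ) hε (by rw [hFeval]; exact hsmall)
    have hwle : ‖w‖ ≤ lam A := by
      by_cases hwe : w = ((lam A : ℝ) : ℂ)
      · rw [hwe]
        simp [Complex.norm_real, Real.norm_eq_abs, abs_of_pos hApos]
      · exact le_of_lt (hAdom w hwroot hwe)
    have : (lam B : ℝ) ≤ ‖w‖ + ‖((lam B : ℝ) : ℂ) - w‖ := by
      calc (lam B : ℝ) = ‖((lam B : ℝ) : ℂ)‖ := by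
            simp [Complex.norm_real, Real.norm_eq_abs, abs_of_pos hBpos]
        _ = ‖w + (((lam B : ℝ) : ℂ) - w)‖ := by ring_nf
        _ ≤ ‖w‖ + ‖((lam B : ℝ) : ℂ) - w‖ := by
            apply norm_add_le
    linarith
  have hlower : lam A - ε < lam B := hB2 hBM
  rw [Real.dist_eq, abs_sub_lt_iff]
  constructor <;> linarith
end

section
/- The zero set of a non-constant real analytic function on a connected open subset of ℝⁿ has Lebesgue measure zero. -/
open MeasureTheory Set Filter Topology

-- Lemma 1: zeros with nonvanishing derivative are countable
lemma countable_zeros {M : Type*} [NormedAddCommGroup M] [NormedSpace ℝ M]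
    {G : ℝ → M} {S : Set ℝ}
    (h : ∀ t ∈ S, G t = 0 ∧ ∃ d : M, HasDerivAt G d t ∧ d ≠ 0) :
    S.Countable := by
  rw [← Set.countable_coe_iff]
  have hdisc : DiscreteTopology S := by
    rw [discreteTopology_subtype_iff]
    intro t ht
    obtain ⟨hG0, d, hd, hdne⟩ := h t ht
    by_contra hne
    have hNB : (𝓝[≠] t ⊓ 𝓟 S).NeBot := ⟨hne⟩
    have hslope : Filter.Tendsto (fun s => (s - t)⁻¹ • (G s - G t)) (𝓝[≠] t) (𝓝 d) := by
      have := hasDerivAt_iff_tendsto_slope.mp hd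
      exact this.congr fun s => slope_def_module G t s
    have h1 : Filter.Tendsto (fun s => (s - t)⁻¹ • (G s - G t)) (𝓝[≠] t ⊓ 𝓟 S) (𝓝 d) :=
      hslope.mono_left inf_le_left
    have h2 : Filter.Tendsto (fun s => (s - t)⁻¹ • (G s - G t)) (𝓝[≠] t ⊓ 𝓟 S) (𝓝 0) := by
      have hev : ∀ᶠ s in 𝓝[≠] t ⊓ 𝓟 S, (s - t)⁻¹ • (G s - G t) = 0 := by
        filter_upwards [Filter.mem_inf_of_right (Filter.mem_principal_self S)] with s hs
        rw [(h s hs).1, hG0, sub_zero, smul_zero]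
      exact Filter.Tendsto.congr' (hev.mono fun s hs => hs.symm) tendsto_const_nhds
    exact hdne (tendsto_nhds_unique h1 h2)
  exact Set.countable_coe_iff.mp ((HereditarilyLindelof_LindelofSets S).countable hdisc)

-- Lemma 2: a measurable set in ℝ^{n+1} all of whose lines in direction i meet it countably is null
lemma null_of_countable_slices {n : ℕ} (i : Fin (n + 1)) {B : Set (Fin (n + 1) → ℝ)}
    (hB : MeasurableSet B)
    (hcount : ∀ y : Fin n → ℝ, {t : ℝ | i.insertNth t y ∈ B}.Countable) :
    volume B = 0 := by
  have hmp := MeasureTheory.volume_preserving_piFinSuccAbove (fun _ : Fin (n+1) => ℝ) i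
  set e := MeasurableEquiv.piFinSuccAbove (fun _ : Fin (n+1) => ℝ) i
  have h1 : volume B = volume (e.symm ⁻¹' B) :=
    ((hmp.symm e).measure_preimage hB.nullMeasurableSet).symm
  rw [h1]
  have hmeas : MeasurableSet (e.symm ⁻¹' B) := e.symm.measurable hB
  have h2 : (volume : Measure (ℝ × (Fin n → ℝ))) (e.symm ⁻¹' B)
      = (volume : Measure ((Fin n → ℝ) × ℝ)) (Prod.swap ⁻¹' (e.symm ⁻¹' B)) := by
    rw [Measure.volume_eq_prod, Measure.volume_eq_prod, ← Measure.prod_swap,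
      Measure.map_apply measurable_swap hmeas]
  rw [h2, Measure.volume_eq_prod, Measure.measure_prod_null (measurable_swap hmeas)]
  refine Filter.Eventually.of_forall fun y => ?_
  have : (Prod.mk y ⁻¹' (Prod.swap ⁻¹' (⇑e.symm ⁻¹' B))) = {t : ℝ | i.insertNth t y ∈ B} := by
    ext t
    simp [e, MeasurableEquiv.piFinSuccAbove, Prod.swap, Fin.insertNthEquiv]
  show volume (Prod.mk y ⁻¹' (Prod.swap ⁻¹' (⇑e.symm ⁻¹' B))) = 0
  rw [this]
  exact Set.Countable.measure_zero (hcount y) _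

-- Lemma 3: the stratum set is null
lemma null_stratum {n : ℕ} {M : Type*} [NormedAddCommGroup M] [NormedSpace ℝ M] [CompleteSpace M]
    {U : Set (Fin (n + 1) → ℝ)} (hU : IsOpen U) {g : (Fin (n + 1) → ℝ) → M}
    (hg : AnalyticOnNhd ℝ g U) (i : Fin (n + 1)) :
    volume {x | x ∈ U ∧ g x = 0 ∧ fderiv ℝ g x (Pi.single i 1) ≠ 0} = 0 := by
  set φ : (Fin (n + 1) → ℝ) → M := fun x => fderiv ℝ g x (Pi.single i 1) with hφ
  have hφcont : ContinuousOn φ U :=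
    (ContinuousLinearMap.apply ℝ M (Pi.single i 1)).continuous.comp_continuousOn
      (hg.fderiv).continuousOn
  set V : Set (Fin (n + 1) → ℝ) := U ∩ φ ⁻¹' ({0}ᶜ) with hV
  have hVopen : IsOpen V := hφcont.isOpen_inter_preimage hU isOpen_compl_singleton
  have hWopen : IsOpen (V ∩ g ⁻¹' ({0}ᶜ)) :=
    (hg.continuousOn.mono (by intro x hx; exact hx.1)).isOpen_inter_preimage hVopen
      isOpen_compl_singleton
  set B : Set (Fin (n + 1) → ℝ) := {x | x ∈ U ∧ g x = 0 ∧ fderiv ℝ g x (Pi.single i 1) ≠ 0}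
  have hBeq : B = V \ (V ∩ g ⁻¹' ({0}ᶜ)) := by
    ext x
    simp only [B, V, Set.mem_setOf_eq, Set.mem_diff, Set.mem_inter_iff, Set.mem_preimage,
      Set.mem_compl_iff, Set.mem_singleton_iff]
    tauto
  have hBmeas : MeasurableSet B := by
    rw [hBeq]; exact hVopen.measurableSet.diff hWopen.measurableSet
  refine null_of_countable_slices i hBmeas fun y => ?_
  refine countable_zeros (G := fun t => g (i.insertNth t y)) fun t ht => ?_
  have hx : i.insertNth t y ∈ B := ht
  obtain ⟨hxU, hgx, hfd⟩ := hx
  refine ⟨hgx, fderiv ℝ g (i.insertNth t y) (Pi.single i 1), ?_, hfd⟩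
  have hL : ∀ s : ℝ, (Fin.insertNth (α := fun _ => ℝ) i s y)
      = (fun s : ℝ => (Fin.insertNth (α := fun _ => ℝ) i 0 y) + s • (Pi.single i 1 : Fin (n+1) → ℝ)) s := by
    intro s
    ext j
    refine Fin.succAboveCases i ?_ ?_ j
    · simp
    · intro j'
      simp [Fin.insertNth_apply_succAbove, Pi.single_eq_of_ne (Fin.succAbove_ne i j')]
  have hLd : HasDerivAt (fun s : ℝ => Fin.insertNth (α := fun _ => ℝ) i s y) (Pi.single i 1) t := by
    have h1 : HasDerivAt (fun s : ℝ => (Fin.insertNth (α := fun _ => ℝ) i 0 y) + s • (Pi.single i 1 : Fin (n+1) → ℝ))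
        (Pi.single i 1) t := by
      simpa using ((hasDerivAt_id t).smul_const (Pi.single i (1:ℝ))).const_add
        (Fin.insertNth (α := fun _ => ℝ) i 0 y)
    exact (funext hL).symm ▸ h1
  exact ((hg _ hxU).differentiableAt.hasFDerivAt).comp_hasDerivAt t hLd


/-- The zero set of a real analytic function, not identically zero, on a connected open subset
of `ℝⁿ` has Lebesgue measure zero. -/
theorem zero_set_of_analytic_measure_zero
    (n : ℕ) (U : Set (Fin n → ℝ)) (f : (Fin n → ℝ) → ℝ)
    (hU : IsOpen U) (hconn : IsConnected U)
    (hf : AnalyticOn ℝ f U)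
    (hne : ¬ ∀ x ∈ U, f x = 0) :
    volume {x | x ∈ U ∧ f x = 0} = 0 := by
  classical
  push_neg at hne
  obtain ⟨x₀, hx₀U, hx₀⟩ := hne
  match n with
  | 0 =>
    have : {x : Fin 0 → ℝ | x ∈ U ∧ f x = 0} = ∅ := by
      ext x
      simp only [Set.mem_setOf_eq, Set.mem_empty_iff_false, iff_false, not_and]
      intro hxU
      have : x = x₀ := Subsingleton.elim _ _
      rw [this]; exact hx₀
    rw [this]; simp
  | n + 1 =>
    have hfN : AnalyticOnNhd ℝ f U := (hU.analyticOn_iff_analyticOnNhd).mp hf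
    set B : ℕ → Fin (n + 1) → Set (Fin (n + 1) → ℝ) := fun k i =>
      {x | x ∈ U ∧ iteratedFDeriv ℝ k f x = 0
        ∧ fderiv ℝ (iteratedFDeriv ℝ k f) x (Pi.single i 1) ≠ 0} with hB
    have hnull : ∀ k i, volume (B k i) = 0 := fun k i =>
      null_stratum hU (hfN.iteratedFDeriv_of_isOpen hU k) i
    have hcover : {x | x ∈ U ∧ f x = 0} ⊆ ⋃ k, ⋃ i, B k i := by
      rintro z ⟨hzU, hzf⟩
      -- not all iterated derivatives vanish at z
      have hex : ∃ k, iteratedFDeriv ℝ k f z ≠ 0 := by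
        by_contra hall
        push_neg at hall
        obtain ⟨p, hp⟩ := hfN z hzU
        obtain ⟨r, hpb⟩ := hp
        have hev : f =ᶠ[nhds z] 0 := by
          have hball : Metric.eball z r ∈ nhds z := Metric.eball_mem_nhds z hpb.r_pos
          filter_upwards [hball] with x hx
          have hy : x - z ∈ Metric.eball (0 : Fin (n+1) → ℝ) r := by
            simpa [edist_eq_enorm_sub] using hx
          have hs := hpb.hasSum_iteratedFDeriv hy
          have hz0 : ∀ k : ℕ, ((k.factorial : ℝ)⁻¹ • iteratedFDeriv ℝ k f z fun _ => x - z) = 0 := by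
            intro k; rw [hall k]; simp
          have h0 := (funext hz0 :
            (fun k : ℕ => ((k.factorial : ℝ)⁻¹ • iteratedFDeriv ℝ k f z fun _ => x - z))
              = fun _ : ℕ => (0:ℝ))
          rw [h0] at hs
          have := hs.unique hasSum_zero
          simpa using this
        have := hfN.eqOn_zero_of_preconnected_of_eventuallyEq_zero hconn.isPreconnected hzU hev
        exact hx₀ (this hx₀U)
      set k := Nat.find hex with hkdef
      clear_value k
      have hk : iteratedFDeriv ℝ k f z ≠ 0 := hkdef ▸ Nat.find_spec hex
      have hmin : ∀ j < k, iteratedFDeriv ℝ j f z = 0 := by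
        intro j hj
        by_contra hj'
        exact Nat.find_min hex (hkdef ▸ hj) hj'
      have hk0 : k ≠ 0 := by
        intro h0
        apply hk
        rw [h0]
        ext m
        simp [iteratedFDeriv_zero_apply, hzf]
      obtain ⟨m, rfl⟩ : ∃ m, k = m + 1 := ⟨k - 1, (Nat.succ_pred_eq_of_ne_zero hk0).symm⟩
      have hm0 : iteratedFDeriv ℝ m f z = 0 := hmin m (Nat.lt_succ_self m)
      obtain ⟨Mv, hMv⟩ : ∃ Mv : Fin (m + 1) → (Fin (n+1) → ℝ),
          iteratedFDeriv ℝ (m + 1) f z Mv ≠ 0 := by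
        by_contra hc
        push_neg at hc
        exact hk (ContinuousMultilinearMap.ext fun Mv => by simpa using hc Mv)
      rw [iteratedFDeriv_succ_apply_left] at hMv
      have hexi : ∃ i : Fin (n + 1),
          fderiv ℝ (iteratedFDeriv ℝ m f) z (Pi.single i 1) ≠ 0 := by
        by_contra hc
        push_neg at hc
        apply hMv
        have hdec : Mv 0 = ∑ i : Fin (n + 1), (Mv 0 i) • (Pi.single i 1 : Fin (n+1) → ℝ) := by
          have := (Finset.univ_sum_single (Mv 0)).symm
          rw [this]
          congr 1
          ext i j
          rcases eq_or_ne j i with rfl | hji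
          · simp
          · simp [Pi.single_eq_of_ne hji]
        rw [hdec, map_sum]
        simp [hc]
      obtain ⟨i, hi⟩ := hexi
      exact Set.mem_iUnion.mpr ⟨m, Set.mem_iUnion.mpr ⟨i, hzU, hm0, hi⟩⟩
    exact measure_mono_null hcover
      (measure_iUnion_null fun k => measure_iUnion_null fun i => hnull k i)
end

section
/- Let f ∈ L_n(Σ_𝐀; ℝ) be an n-locally constant function which is 'separating', i.e., f(ω) ≠ f(ω') whenever ω|n ≠ ω'|n. Let X, Y ⊆ Σ_𝐀 be dense, shift-forward-invariant subsets (σ(X) ⊆ X, σ(Y) ⊆ Y), let g ∈ L_n(Σ_𝐀; ℝ), and let Φ : X → Y be a surjection with Φ∘σ = σ∘Φ on X and f = g∘Φ on X. Then for all m ∈ ℕ and all ω, ω' ∈ X with ω|nm = ω'|nm, we have Φ(ω)|nm = Φ(ω')|nm; consequently Φ is uniformly continuous on X and extends uniquely to a continuous map Φ* : Σ_𝐀 → Σ_𝐀 with Φ*∘σ = σ∘Φ*. -/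
open MeasureTheory Filter Topology
open scoped BigOperators ENNReal

/-- The one-sided topological Markov shift over the alphabet `Fin N` with (0-1 real)
transition matrix `A`. -/
def Shift (N : ℕ) (A : Matrix (Fin N) (Fin N) ℝ) : Type :=
  {ω : ℕ → Fin N // ∀ n, A (ω n) (ω (n + 1)) = 1}

/-- Product (= metric `d(ω,ω') = ∑ |ω_n − ω'_n| / 2^n`) uniformity on the shift space. -/
noncomputable instance (N : ℕ) (A : Matrix (Fin N) (Fin N) ℝ) : UniformSpace (Shift N A) :=
  letI : UniformSpace (Fin N) := ⊥
  inferInstanceAs (UniformSpace {ω : ℕ → Fin N // ∀ n, A (ω n) (ω (n + 1)) = 1})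

noncomputable instance (N : ℕ) (A : Matrix (Fin N) (Fin N) ℝ) : MeasurableSpace (Shift N A) := borel _
instance (N : ℕ) (A : Matrix (Fin N) (Fin N) ℝ) : BorelSpace (Shift N A) := ⟨rfl⟩

/-- The shift map `σ`. -/
def shiftMap {N : ℕ} {A : Matrix (Fin N) (Fin N) ℝ} : Shift N A → Shift N A :=
  fun ω => ⟨fun n => ω.1 (n + 1), fun n => ω.2 (n + 1)⟩

/-- The cylinder `[ω|n]` of points agreeing with `ω` in the first `n` coordinates. -/
def cyl {N : ℕ} {A : Matrix (Fin N) (Fin N) ℝ} (ω : Shift N A) (n : ℕ) : Set (Shift N A) :=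
  {ω' | ∀ k < n, ω'.1 k = ω.1 k}

/-- The cylinder `[w]` of a word `w` of length `n`. -/
def cylW {N : ℕ} {A : Matrix (Fin N) (Fin N) ℝ} {n : ℕ} (w : Fin n → Fin N) :
    Set (Shift N A) :=
  {ω | ∀ k : Fin n, ω.1 k.1 = w k}

/-- Birkhoff sum `S_n f = ∑_{k<n} f ∘ σ^k`. -/
noncomputable def birkhoff {N : ℕ} {A : Matrix (Fin N) (Fin N) ℝ} (f : Shift N A → ℝ)
    (n : ℕ) (ω : Shift N A) : ℝ :=
  ∑ k ∈ Finset.range n, f (shiftMap^[k] ω)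

/-- The matrix `A` is a 0-1 matrix. -/
def ZeroOne {N : ℕ} (A : Matrix (Fin N) (Fin N) ℝ) : Prop := ∀ i j, A i j = 0 ∨ A i j = 1

/-- The matrix `A` is aperiodic: some power has all entries positive. -/
def Aperiodic {N : ℕ} (A : Matrix (Fin N) (Fin N) ℝ) : Prop := ∃ k : ℕ, ∀ i j, 0 < (A ^ k) i j

/-- The metric `d(ω,ω') = ∑ |ω_n − ω'_n| / 2^n` on the shift space. -/
noncomputable def dshift {N : ℕ} {A : Matrix (Fin N) (Fin N) ℝ} (ω ω' : Shift N A) : ℝ :=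
  ∑' n : ℕ, |((ω.1 n : ℕ) : ℝ) - ((ω'.1 n : ℕ) : ℝ)| / 2 ^ n

/-- `f` is Hölder continuous (w.r.t. the metric `dshift`). -/
def HolderCont {N : ℕ} {A : Matrix (Fin N) (Fin N) ℝ} (f : Shift N A → ℝ) : Prop :=
  ∃ α > (0 : ℝ), ∃ C : ℝ, ∀ ω ω', |f ω - f ω'| ≤ C * dshift ω ω' ^ α

/-- The transfer operator `(L_f φ)(ω) = ∑_{σω' = ω} e^{f ω'} φ ω'`. -/
noncomputable def transferOp {N : ℕ} {A : Matrix (Fin N) (Fin N) ℝ} (f φ : Shift N A → ℝ)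
    (ω : Shift N A) : ℝ :=
  ∑' ω' : {ω' : Shift N A // shiftMap ω' = ω}, Real.exp (f ω'.1) * φ ω'.1

/-- `μ` is shift invariant. -/
def Invariant {N : ℕ} {A : Matrix (Fin N) (Fin N) ℝ} (μ : Measure (Shift N A)) : Prop :=
  ∀ B : Set (Shift N A), MeasurableSet B → μ (shiftMap ⁻¹' B) = μ B

/-- `μ` is a Gibbs measure for `f` with pressure constant `P`:
`C⁻¹ ≤ μ [ω|n] / exp(−nP + S_n f ω) ≤ C` for all `ω`, `n`. -/
def IsGibbs {N : ℕ} {A : Matrix (Fin N) (Fin N) ℝ} (μ : Measure (Shift N A))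
    (f : Shift N A → ℝ) (P : ℝ) : Prop :=
  ∃ C > (0 : ℝ), ∀ (ω : Shift N A) (n : ℕ),
    C⁻¹ * Real.exp (-(n : ℝ) * P + birkhoff f n ω) ≤ (μ (cyl ω n)).toReal ∧
    (μ (cyl ω n)).toReal ≤ C * Real.exp (-(n : ℝ) * P + birkhoff f n ω)

/-- Entropy of the partition of `Σ_A` into cylinders of length `n`. -/
noncomputable def cylEntropy {N : ℕ} {A : Matrix (Fin N) (Fin N) ℝ}
    (μ : Measure (Shift N A)) (n : ℕ) : ℝ :=
  -∑ w : Fin n → Fin N, (μ (cylW w)).toReal * Real.log (μ (cylW w)).toReal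

/-- Kolmogorov–Sinai entropy of an invariant measure on the shift, computed (via the
generating cylinder partition and subadditivity) as `inf_n H_n / n = lim_n H_n / n`. -/
noncomputable def ksEntropy {N : ℕ} {A : Matrix (Fin N) (Fin N) ℝ}
    (μ : Measure (Shift N A)) : ℝ :=
  ⨅ n : ℕ, cylEntropy μ (n + 1) / (n + 1)

/-- Topological pressure `P(σ, f) = sup_μ (h_μ(σ) + ∫ f dμ)` over invariant Borel
probability measures. -/
noncomputable def pressure {N : ℕ} {A : Matrix (Fin N) (Fin N) ℝ} (f : Shift N A → ℝ) : ℝ :=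
  sSup {x : ℝ | ∃ μ : Measure (Shift N A), IsProbabilityMeasure μ ∧ Invariant μ ∧
    x = ksEntropy μ + ∫ ω, f ω ∂μ}

/-- The entropy spectrum `E^{(μ)}(α)`: the topological entropy of the level set
`{ω : lim_n −(1/n) log μ [ω|n] = α}`. -/
noncomputable def entSpec {N : ℕ} {A : Matrix (Fin N) (Fin N) ℝ}
    (μ : Measure (Shift N A)) (α : ℝ) : EReal :=
  Dynamics.coverEntropy shiftMap
    {ω : Shift N A |
      Tendsto (fun n : ℕ => -(n : ℝ)⁻¹ * Real.log (μ (cyl ω n)).toReal) atTop (𝓝 α)}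


section ExtAux

open scoped Uniformity

variable {N : ℕ} {A : Matrix (Fin N) (Fin N) ℝ}

lemma shift_iterate_apply (ω : Shift N A) (j i : ℕ) :
    (shiftMap^[j] ω).1 i = ω.1 (i + j) := by
  induction j generalizing ω with
  | zero => rfl
  | succ j ih =>
    rw [Function.iterate_succ_apply, ih]
    show ω.1 (i + j + 1) = ω.1 (i + (j + 1))
    congr 1

lemma shift_uniformity :
    𝓤 (Shift N A) =
      ⨅ M : ℕ, 𝓟 {p : Shift N A × Shift N A | ∀ k < M, p.1.1 k = p.2.1 k} := by
  letI : UniformSpace (Fin N) := ⊥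
  have h1 : 𝓤 (Shift N A) =
      Filter.comap (fun q : Shift N A × Shift N A => (q.1.1, q.2.1)) (𝓤 (ℕ → Fin N)) :=
    uniformity_subtype
  have h2 : 𝓤 (ℕ → Fin N) =
      ⨅ i : ℕ, 𝓟 {p : (ℕ → Fin N) × (ℕ → Fin N) | p.1 i = p.2 i} := by
    rw [Pi.uniformity]
    refine iInf_congr fun i => ?_
    rw [bot_uniformity, Filter.comap_principal]
    congr 1
  rw [h1, h2, Filter.comap_iInf]
  simp only [Filter.comap_principal, Set.preimage_setOf_eq]
  apply le_antisymm
  · refine le_iInf fun M => ?_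
    rw [le_principal_iff]
    have hmem : ∀ i : ℕ, {p : Shift N A × Shift N A | p.1.1 i = p.2.1 i} ∈
        (⨅ i : ℕ, 𝓟 {p : Shift N A × Shift N A | p.1.1 i = p.2.1 i}) := fun i =>
      Filter.mem_iInf_of_mem i (Filter.mem_principal_self _)
    have hset : {p : Shift N A × Shift N A | ∀ k < M, p.1.1 k = p.2.1 k} =
        ⋂ i ∈ Finset.range M, {p : Shift N A × Shift N A | p.1.1 i = p.2.1 i} := by
      ext p; simp [Finset.mem_range]
    rw [hset]
    exact (Filter.biInter_finset_mem _).mpr fun i _ => hmem i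
  · refine le_iInf fun i => ?_
    refine iInf_le_of_le (i + 1) (Filter.principal_mono.2 fun p hp => ?_)
    exact hp i (Nat.lt_succ_self i)

lemma shift_mem_uniformity_iff {U : Set (Shift N A × Shift N A)} :
    U ∈ 𝓤 (Shift N A) ↔
      ∃ M : ℕ, ∀ p : Shift N A × Shift N A, (∀ k < M, p.1.1 k = p.2.1 k) → p ∈ U := by
  rw [shift_uniformity]
  rw [Filter.mem_iInf_of_directed]
  · simp only [Filter.mem_principal, Set.subset_def, Set.mem_setOf_eq]
  · intro M M'
    refine ⟨max M M', Filter.principal_mono.2 fun p hp k hk => hp k ?_,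
      Filter.principal_mono.2 fun p hp k hk => hp k ?_⟩
    · exact lt_of_lt_of_le hk (le_max_left _ _)
    · exact lt_of_lt_of_le hk (le_max_right _ _)

lemma shift_basic_mem (M : ℕ) :
    {p : Shift N A × Shift N A | ∀ k < M, p.1.1 k = p.2.1 k} ∈ 𝓤 (Shift N A) :=
  shift_mem_uniformity_iff.2 ⟨M, fun _ h => h⟩

lemma dense_exists_agree {X : Set (Shift N A)} (hX : Dense X) (ω : Shift N A) (M : ℕ) :
    ∃ x ∈ X, ∀ k < M, x.1 k = ω.1 k := by
  have hb : UniformSpace.ball ω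
      {p : Shift N A × Shift N A | ∀ k < M, p.1.1 k = p.2.1 k} ∈ 𝓝 ω :=
    UniformSpace.ball_mem_nhds ω (shift_basic_mem M)
  obtain ⟨x, hx1, hx2⟩ := mem_closure_iff_nhds.1 (hX ω) _ hb
  exact ⟨x, hx2, fun k hk => (hx1 k hk).symm⟩

lemma continuous_shiftMap : Continuous (shiftMap : Shift N A → Shift N A) := by
  letI : UniformSpace (Fin N) := ⊥
  refine Continuous.subtype_mk ?_ _
  exact continuous_pi fun i => (continuous_apply (i + 1)).comp continuous_subtype_val

lemma shift_t2 : T2Space (Shift N A) := by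
  letI : UniformSpace (Fin N) := ⊥
  haveI : DiscreteTopology (Fin N) := ⟨rfl⟩
  exact inferInstanceAs (T2Space {ω : ℕ → Fin N // ∀ n, A (ω n) (ω (n + 1)) = 1})

lemma shift_compact : CompactSpace (Shift N A) := by
  letI : UniformSpace (Fin N) := ⊥
  haveI : DiscreteTopology (Fin N) := ⟨rfl⟩
  have hc : IsClosed {ω : ℕ → Fin N | ∀ n, A (ω n) (ω (n + 1)) = 1} := by
    have he : {ω : ℕ → Fin N | ∀ n, A (ω n) (ω (n + 1)) = 1} =
        ⋂ m : ℕ, (fun ω : ℕ → Fin N => A (ω m) (ω (m + 1))) ⁻¹' {1} := by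
      ext ω; simp
    rw [he]
    refine isClosed_iInter fun m => IsClosed.preimage ?_ isClosed_singleton
    have hcomp : (fun ω : ℕ → Fin N => A (ω m) (ω (m + 1))) =
        (fun p : Fin N × Fin N => A p.1 p.2) ∘ fun ω : ℕ → Fin N => (ω m, ω (m + 1)) := rfl
    rw [hcomp]
    exact continuous_of_discreteTopology.comp
      ((continuous_apply m).prodMk (continuous_apply (m + 1)))
  exact isCompact_iff_compactSpace.mp hc.isCompact

end ExtAux

/-- Extension lemma.  Let `f` be `n`-locally constant and separating, `X, Y` dense
shift-forward-invariant subsets, `g` `n`-locally constant, and `Φ` a map with `Φ(X) = Y`,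
commuting with the shift on `X` and satisfying `f = g ∘ Φ` on `X`.  Then whenever
`ω, ω' ∈ X` agree in their first `n·m` coordinates, so do `Φ ω` and `Φ ω'`; consequently `Φ`
is uniformly continuous on `X` and extends uniquely to a continuous `Φ* : Σ_A → Σ_A`
commuting with the shift. -/
theorem extension_of_isomorphism
    (N : ℕ) (hN : 2 ≤ N) (A : Matrix (Fin N) (Fin N) ℝ)
    (h01 : ZeroOne A) (hap : Aperiodic A)
    (n : ℕ) (hn : 0 < n)
    (f g : Shift N A → ℝ)
    (hfloc : ∀ ω ω' : Shift N A, (∀ k < n, ω.1 k = ω'.1 k) → f ω = f ω')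
    (hgloc : ∀ ω ω' : Shift N A, (∀ k < n, ω.1 k = ω'.1 k) → g ω = g ω')
    (hfsep : ∀ ω ω' : Shift N A, (∃ k < n, ω.1 k ≠ ω'.1 k) → f ω ≠ f ω')
    (X Y : Set (Shift N A)) (hX : Dense X) (hY : Dense Y)
    (hXinv : Set.MapsTo shiftMap X X) (hYinv : Set.MapsTo shiftMap Y Y)
    (Φ : Shift N A → Shift N A)
    (hmap : Set.MapsTo Φ X Y) (hsurj : Set.SurjOn Φ X Y)
    (hcomm : ∀ ω ∈ X, Φ (shiftMap ω) = shiftMap (Φ ω))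
    (hfg : ∀ ω ∈ X, f ω = g (Φ ω)) :
    (∀ m : ℕ, ∀ ω ∈ X, ∀ ω' ∈ X,
      (∀ k < n * m, ω.1 k = ω'.1 k) → ∀ k < n * m, (Φ ω).1 k = (Φ ω').1 k) ∧
    UniformContinuousOn Φ X ∧
    ∃! Φs : Shift N A → Shift N A,
      Continuous Φs ∧ Set.EqOn Φs Φ X ∧ Φs ∘ shiftMap = shiftMap ∘ Φs := by
  classical
  have hXiter : ∀ (j : ℕ) (ω : Shift N A), ω ∈ X → shiftMap^[j] ω ∈ X := by
    intro j
    induction j with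
    | zero => exact fun ω h => h
    | succ j ih =>
      intro ω h
      rw [Function.iterate_succ_apply']
      exact hXinv (ih ω h)
  have hcommiter : ∀ (j : ℕ) (ω : Shift N A), ω ∈ X →
      Φ (shiftMap^[j] ω) = shiftMap^[j] (Φ ω) := by
    intro j
    induction j with
    | zero => intro ω _; rfl
    | succ j ih =>
      intro ω h
      rw [Function.iterate_succ_apply', Function.iterate_succ_apply',
        hcomm _ (hXiter j ω h), ih ω h]
  -- Lemma A: inverse determinism at the level of (n·m)-prefixes.
  have lemA : ∀ m : ℕ, ∀ ω ∈ X, ∀ ω' ∈ X,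
      (∀ k < n * m, (Φ ω).1 k = (Φ ω').1 k) → ∀ k < n * m, ω.1 k = ω'.1 k := by
    intro m ω hω ω' hω' hΦ k hk
    have hm : 0 < m := by
      rcases Nat.eq_zero_or_pos m with h | h
      · subst h; omega
      · exact h
    have hnm : n ≤ n * m := Nat.le_mul_of_pos_right n hm
    set j := min k (n * m - n) with hj
    have hjk : j ≤ k := min_le_left _ _
    have hjn : j + n ≤ n * m := by omega
    have hkj : k - j < n := by omega
    have hfval : f (shiftMap^[j] ω) = f (shiftMap^[j] ω') := by
      have h1 : f (shiftMap^[j] ω) = g (shiftMap^[j] (Φ ω)) := by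
        rw [hfg _ (hXiter j ω hω), hcommiter j ω hω]
      have h2 : f (shiftMap^[j] ω') = g (shiftMap^[j] (Φ ω')) := by
        rw [hfg _ (hXiter j ω' hω'), hcommiter j ω' hω']
      rw [h1, h2]
      apply hgloc
      intro i hi
      rw [shift_iterate_apply, shift_iterate_apply]
      exact hΦ (i + j) (by omega)
    have hagree : ∀ i < n, (shiftMap^[j] ω).1 i = (shiftMap^[j] ω').1 i := by
      by_contra hcon
      push_neg at hcon
      obtain ⟨i, hi, hne⟩ := hcon
      exact hfsep _ _ ⟨i, hi, hne⟩ hfval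
    have hfin := hagree (k - j) hkj
    rwa [shift_iterate_apply, shift_iterate_apply, Nat.sub_add_cancel hjk] at hfin
  -- The key combinatorial statement.
  have key : ∀ m : ℕ, ∀ ω ∈ X, ∀ ω' ∈ X,
      (∀ k < n * m, ω.1 k = ω'.1 k) → ∀ k < n * m, (Φ ω).1 k = (Φ ω').1 k := by
    intro m
    set q : Shift N A → (Fin (n * m) → Fin N) := fun ω i => ω.1 i.1 with hq
    have hqX : ∀ ω : Shift N A, ∃ x ∈ X, q x = q ω := by
      intro ω
      obtain ⟨x, hx, hagree⟩ := dense_exists_agree hX ω (n * m)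
      exact ⟨x, hx, funext fun i => hagree i.1 i.2⟩
    have hqY : ∀ ω : Shift N A, ∃ y ∈ Y, q y = q ω := by
      intro ω
      obtain ⟨y, hy, hagree⟩ := dense_exists_agree hY ω (n * m)
      exact ⟨y, hy, funext fun i => hagree i.1 i.2⟩
    have lemA' : ∀ ω ∈ X, ∀ ω' ∈ X, q (Φ ω) = q (Φ ω') → q ω = q ω' := by
      intro ω hω ω' hω' h
      funext i
      exact lemA m ω hω ω' hω'
        (fun k hk => congrFun h (⟨k, hk⟩ : Fin (n * m))) i.1 i.2
    have hchoice : ∀ v : Set.range q, ∃ x ∈ X, q (Φ x) = v.1 := by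
      intro v
      obtain ⟨ω, hω⟩ := v.2
      obtain ⟨y, hy, hqy⟩ := hqY ω
      obtain ⟨x, hx, hΦx⟩ := hsurj hy
      exact ⟨x, hx, by rw [hΦx, hqy, hω]⟩
    choose xw hxwX hxwq using hchoice
    set G : Set.range q → Set.range q :=
      fun v => ⟨q (xw v), Set.mem_range_self _⟩ with hG
    have hGprop : ∀ ω ∈ X,
        G ⟨q (Φ ω), Set.mem_range_self _⟩ = ⟨q ω, Set.mem_range_self _⟩ := by
      intro ω hω
      apply Subtype.ext
      show q (xw _) = q ω
      apply lemA' _ (hxwX _) _ hω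
      exact hxwq _
    have hGsurj : Function.Surjective G := by
      intro v
      obtain ⟨ω, hω⟩ := v.2
      obtain ⟨x, hx, hqx⟩ := hqX ω
      refine ⟨⟨q (Φ x), Set.mem_range_self _⟩, ?_⟩
      rw [hGprop x hx]
      exact Subtype.ext (by show q x = v.1; rw [hqx, hω])
    have hGinj : Function.Injective G := Finite.injective_iff_surjective.mpr hGsurj
    intro ω hω ω' hω' hagree k hk
    have hqq : q ω = q ω' := funext fun i => hagree i.1 i.2
    have h1 : G ⟨q (Φ ω), Set.mem_range_self _⟩ = G ⟨q (Φ ω'), Set.mem_range_self _⟩ := by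
      rw [hGprop ω hω, hGprop ω' hω']
      exact Subtype.ext hqq
    have h2 := congrArg Subtype.val (hGinj h1)
    exact congrFun h2 (⟨k, hk⟩ : Fin (n * m))
  -- Uniform continuity on X.
  have hUC : UniformContinuousOn Φ X := by
    rw [UniformContinuousOn, Filter.tendsto_def]
    intro U hU
    obtain ⟨M, hM⟩ := shift_mem_uniformity_iff.1 hU
    refine Filter.mem_of_superset
      (Filter.inter_mem_inf (shift_basic_mem (n * M))
        (Filter.mem_principal_self (X ×ˢ X))) ?_
    rintro ⟨x, y⟩ ⟨h1, h2⟩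
    exact hM _ (fun k hk => key M x h2.1 y h2.2 h1 k
      (lt_of_lt_of_le hk (Nat.le_mul_of_pos_left M hn)))
  -- The extension.
  haveI : T2Space (Shift N A) := shift_t2
  haveI : CompactSpace (Shift N A) := shift_compact
  refine ⟨key, hUC, ?_⟩
  have h_e : IsUniformInducing (Subtype.val : X → Shift N A) :=
    isUniformEmbedding_subtype_val.isUniformInducing
  have h_dense : DenseRange (Subtype.val : X → Shift N A) := hX.denseRange_val
  have h_f : UniformContinuous (X.restrict Φ) := uniformContinuousOn_iff_restrict.1 hUC
  set Φs : Shift N A → Shift N A := (h_e.isDenseInducing h_dense).extend (X.restrict Φ)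
    with hΦs
  have hcont : Continuous Φs :=
    (uniformContinuous_uniformly_extend h_e h_dense h_f).continuous
  have heq : Set.EqOn Φs Φ X := fun x hx =>
    uniformly_extend_of_ind h_e h_dense h_f ⟨x, hx⟩
  have hcommΦs : Φs ∘ shiftMap = shiftMap ∘ Φs := by
    apply Continuous.ext_on hX (hcont.comp continuous_shiftMap)
      (continuous_shiftMap.comp hcont)
    intro x hx
    show Φs (shiftMap x) = shiftMap (Φs x)
    rw [heq (hXinv hx), heq hx, hcomm x hx]
  refine ⟨Φs, ⟨hcont, heq, hcommΦs⟩, ?_⟩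
  rintro Ψ ⟨hΨc, hΨeq, -⟩
  apply Continuous.ext_on hX hΨc hcont
  intro x hx
  rw [hΨeq hx, heq hx]
end
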